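/- Let V be a finite-dimensional complex vector space and A ∈ End_ℂ(V) an endomorphism all of whose eigenvalues λ satisfy |λ| < 1. Then for every holomorphic map g from the open unit disk 𝔻 = {z ∈ ℂ : |z| < 1} to V there exist a unique vector v ∈ V and a holomorphic map h : 𝔻 → V with g(z) = v + (z·id_V − A)(h(z)) for all z ∈ 𝔻. (Equivalently, the map V → Coker of multiplication by (z − A) on O(𝔻; V), sending a vector to the class of the corresponding constant function, is an isomorphism.) -/

import Mathlib

open scoped ENNReal NNReal Topology
open Filter Metric

set_option linter.unusedSectionVars false
set_option linter.unusedVariables false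
set_option maxHeartbeats 1000000

namespace CokerAux

variable {V : Type} [NormedAddCommGroup V] [NormedSpace ℂ V] [FiniteDimensional ℂ V]

lemma pow_bound (A : V →L[ℂ] V) (hA : ∀ μ ∈ spectrum ℂ A, ‖μ‖ < 1) :
    ∃ s C : ℝ, 0 < s ∧ s < 1 ∧ 0 ≤ C ∧ ∀ n : ℕ, ‖A ^ n‖ ≤ C * s ^ n := by
  have hrad : spectralRadius ℂ A < 1 := by
    rcases Set.eq_empty_or_nonempty (spectrum ℂ A) with he | hne
    · rw [spectralRadius, he]
      simp
    · obtain ⟨μ₀, hmem, hmax⟩ := (spectrum.isCompact A).exists_isMaxOn hne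
        (continuous_nnnorm.continuousOn)
      have h1 : (‖μ₀‖₊ : ℝ≥0∞) < 1 := by
        have := hA μ₀ hmem
        exact_mod_cast this
      refine lt_of_le_of_lt ?_ h1
      exact iSup₂_le fun k hk => by exact_mod_cast hmax hk
  obtain ⟨sE, h1, h2⟩ := exists_between hrad
  have hsE0 : 0 < sE := lt_of_le_of_lt (zero_le) h1
  have hsEtop : sE ≠ ⊤ := (h2.trans_le le_top).ne
  set s' : ℝ≥0 := sE.toNNReal with hs'
  have hsE : sE = (s' : ℝ≥0∞) := (ENNReal.coe_toNNReal hsEtop).symm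
  have htend := spectrum.pow_nnnorm_pow_one_div_tendsto_nhds_spectralRadius A
  have hev : ∀ᶠ n : ℕ in atTop, (‖A ^ n‖₊ : ℝ≥0∞) ^ (1 / (n:ℝ)) < sE :=
    htend.eventually_lt_const h1
  obtain ⟨N, hN⟩ := eventually_atTop.mp hev
  have key : ∀ n : ℕ, n ≥ max N 1 → ‖A ^ n‖ ≤ (s' : ℝ) ^ n := by
    intro n hn
    have hn1 : 1 ≤ n := le_trans (le_max_right N 1) hn
    have hlt := (hN n (le_trans (le_max_left N 1) hn)).le
    have h3 : ((‖A ^ n‖₊ : ℝ≥0∞) ^ (1 / (n:ℝ))) ^ (n:ℝ) ≤ sE ^ (n:ℝ) :=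
      ENNReal.rpow_le_rpow hlt (by positivity)
    rw [← ENNReal.rpow_mul, one_div,
      inv_mul_cancel₀ (by exact_mod_cast Nat.one_le_iff_ne_zero.mp hn1 : (n:ℝ) ≠ 0),
      ENNReal.rpow_one, hsE, ← ENNReal.coe_rpow_of_nonneg _ (by positivity)] at h3
    have h4 : ‖A ^ n‖₊ ≤ s' ^ (n:ℝ) := by exact_mod_cast h3
    rw [NNReal.rpow_natCast] at h4
    calc ‖A ^ n‖ = ((‖A ^ n‖₊ : ℝ)) := rfl
      _ ≤ ((s' ^ n : ℝ≥0) : ℝ) := by exact_mod_cast h4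
      _ = (s' : ℝ) ^ n := by push_cast; ring
  set s : ℝ := (s' : ℝ) with hsdef
  have hs0 : 0 < s := by
    have : (0:ℝ≥0∞) < (s' : ℝ≥0∞) := hsE ▸ hsE0
    exact_mod_cast this
  have hs1 : s < 1 := by
    have : (s' : ℝ≥0∞) < 1 := hsE ▸ h2
    exact_mod_cast this
  set M := max N 1
  refine ⟨s, 1 + ∑ k ∈ Finset.range M, ‖A ^ k‖ / s ^ k, hs0, hs1, by positivity, ?_⟩
  intro n
  rcases lt_or_ge n M with h | h
  · have hterm : ‖A ^ n‖ / s ^ n ≤ ∑ k ∈ Finset.range M, ‖A ^ k‖ / s ^ k :=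
      Finset.single_le_sum (f := fun k => ‖A ^ k‖ / s ^ k)
        (fun k _ => by positivity) (Finset.mem_range.mpr h)
    have : ‖A ^ n‖ / s ^ n ≤ 1 + ∑ k ∈ Finset.range M, ‖A ^ k‖ / s ^ k :=
      hterm.trans (by linarith)
    calc ‖A ^ n‖ = (‖A ^ n‖ / s ^ n) * s ^ n := by field_simp
      _ ≤ _ := by
          apply mul_le_mul_of_nonneg_right this (by positivity)
  · calc ‖A ^ n‖ ≤ s ^ n := key n h
      _ = 1 * s ^ n := (one_mul _).symm
      _ ≤ _ := by
          apply mul_le_mul_of_nonneg_right _ (by positivity)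
          have : (0:ℝ) ≤ ∑ k ∈ Finset.range M, ‖A ^ k‖ / s ^ k :=
            Finset.sum_nonneg fun k _ => by positivity
          linarith

lemma exists_coeffs (f : ℂ → V) (hf : DifferentiableOn ℂ f (ball (0:ℂ) 1)) :
    ∃ a : ℕ → V, (∀ z : ℂ, ‖z‖ < 1 → HasSum (fun n => z ^ n • a n) (f z)) ∧
      ∀ t : ℝ, 0 < t → t < 1 → ∃ C : ℝ, 0 ≤ C ∧ ∀ n, ‖a n‖ * t ^ n ≤ C := by
  set p := cauchyPowerSeries f 0 ((2⁻¹ : ℝ≥0) : ℝ) with hp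
  have key : ∀ r : ℝ≥0, 0 < r → (r : ℝ) < 1 → HasFPowerSeriesOnBall f p 0 r := by
    intro r hr0 hr1
    have h1 : HasFPowerSeriesOnBall f (cauchyPowerSeries f 0 r) 0 r :=
      (hf.mono (closedBall_subset_ball hr1)).hasFPowerSeriesOnBall hr0
    have h2 : HasFPowerSeriesOnBall f p 0 ((2⁻¹ : ℝ≥0)) :=
      (hf.mono (closedBall_subset_ball (by norm_num))).hasFPowerSeriesOnBall (by norm_num)
    rwa [h1.hasFPowerSeriesAt.eq_formalMultilinearSeries h2.hasFPowerSeriesAt] at h1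
  refine ⟨p.coeff, ?_, ?_⟩
  · intro z hz
    obtain ⟨u, hu1, hu2⟩ := exists_between hz
    have hu0 : 0 ≤ u := (norm_nonneg z).trans hu1.le
    have h := (key u.toNNReal (by simpa [Real.toNNReal_pos] using lt_of_le_of_lt (norm_nonneg z) hu1)
      (by rwa [Real.coe_toNNReal _ hu0]))
    have hz' : z ∈ Metric.eball (0:ℂ) u.toNNReal := by
      rw [EMetric.mem_ball, edist_zero_right]
      exact_mod_cast (by simpa [Real.coe_toNNReal _ hu0] using hu1 :
        (‖z‖₊ : ℝ) < (u.toNNReal : ℝ))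
    have := h.hasSum hz'
    simpa [FormalMultilinearSeries.apply_eq_pow_smul_coeff] using this
  · intro t ht0 ht1
    obtain ⟨u, hu1, hu2⟩ := exists_between ht1
    have hu0 : 0 < u := ht0.trans hu1
    have hrad : (t.toNNReal : ℝ≥0∞) < p.radius := by
      refine lt_of_lt_of_le ?_ (key u.toNNReal (Real.toNNReal_pos.mpr hu0)
        (by rwa [Real.coe_toNNReal _ hu0.le])).r_le
      exact_mod_cast (Real.toNNReal_lt_toNNReal_iff hu0).mpr hu1
    obtain ⟨C, hC0, hC⟩ := p.norm_mul_pow_le_of_lt_radius hrad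
    exact ⟨C, hC0.le, fun n => by
      simpa [FormalMultilinearSeries.norm_apply_eq_norm_coef,
        Real.coe_toNNReal _ ht0.le] using hC n⟩

lemma summable_shift (A : V →L[ℂ] V) {s CA : ℝ} (hs0 : 0 < s) (hs1 : s < 1)
    (hCA : ∀ n : ℕ, ‖A ^ n‖ ≤ CA * s ^ n) (a : ℕ → V)
    {t C : ℝ} (hst : s < t) (ht1 : t < 1) (hC0 : 0 ≤ C) (hC : ∀ n, ‖a n‖ ≤ C / t ^ n)
    (k : ℕ) :
    (∀ n : ℕ, ‖(A ^ n) (a (n + k))‖ ≤ (CA * C / t ^ k) * (s / t) ^ n) ∧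
      Summable (fun n : ℕ => (A ^ n) (a (n + k))) := by
  have ht0 : 0 < t := hs0.trans hst
  have hterm : ∀ n : ℕ, ‖(A ^ n) (a (n + k))‖ ≤ (CA * C / t ^ k) * (s / t) ^ n := by
    intro n
    calc ‖(A ^ n) (a (n + k))‖ ≤ ‖A ^ n‖ * ‖a (n + k)‖ := (A ^ n).le_opNorm _
      _ ≤ (CA * s ^ n) * (C / t ^ (n + k)) := by
          have hCA0 : 0 ≤ CA * s ^ n := le_trans (norm_nonneg _) (hCA n)
          exact mul_le_mul (hCA n) (hC (n+k)) (norm_nonneg _) hCA0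
      _ = (CA * C / t ^ k) * (s / t) ^ n := by
          rw [pow_add, div_pow]
          field_simp
  refine ⟨hterm, Summable.of_norm (Summable.of_nonneg_of_le (fun n => norm_nonneg _) hterm
    ((summable_geometric_of_lt_one (by positivity) (by rwa [div_lt_one ht0])).mul_left _))⟩

lemma exists_rep (A : V →L[ℂ] V) {s CA : ℝ} (hs0 : 0 < s) (hs1 : s < 1) (hCA0 : 0 ≤ CA)
    (hCA : ∀ n : ℕ, ‖A ^ n‖ ≤ CA * s ^ n)
    (a : ℕ → V) (g : ℂ → V)
    (ha : ∀ z : ℂ, ‖z‖ < 1 → HasSum (fun n => z ^ n • a n) (g z))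
    (hab : ∀ t : ℝ, 0 < t → t < 1 → ∃ C : ℝ, 0 ≤ C ∧ ∀ n, ‖a n‖ * t ^ n ≤ C) :
    ∃ v : V, ∃ h : ℂ → V, DifferentiableOn ℂ h (ball (0 : ℂ) 1) ∧
      ∀ z ∈ ball (0 : ℂ) 1, g z = v + (z • h z - A (h z)) := by
  have hanorm : ∀ t : ℝ, 0 < t → t < 1 → ∃ C : ℝ, 0 ≤ C ∧ ∀ n, ‖a n‖ ≤ C / t ^ n := by
    intro t ht0 ht1
    obtain ⟨C, hC0, hC⟩ := hab t ht0 ht1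
    exact ⟨C, hC0, fun n => (le_div_iff₀ (by positivity)).mpr (hC n)⟩
  have hsum : ∀ k : ℕ, Summable (fun n : ℕ => (A ^ n) (a (n + k))) := by
    intro k
    obtain ⟨t, hst, ht1⟩ := exists_between hs1
    obtain ⟨C, hC0, hC⟩ := hanorm t (hs0.trans hst) ht1
    exact (summable_shift A hs0 hs1 hCA a hst ht1 hC0 hC k).2
  set b : ℕ → V := fun j => ∑' n : ℕ, (A ^ n) (a (n + (j+1))) with hbdef
  -- bound on b
  have hbnorm : ∀ t : ℝ, s < t → t < 1 → ∃ D : ℝ, 0 ≤ D ∧ ∀ j, ‖b j‖ * t ^ j ≤ D := by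
    intro t hst ht1
    have ht0 : 0 < t := hs0.trans hst
    obtain ⟨C, hC0, hC⟩ := hanorm t ht0 ht1
    have hq1 : s / t < 1 := by rwa [div_lt_one ht0]
    have hq0 : (0:ℝ) ≤ s / t := by positivity
    have hq2 : (0:ℝ) < 1 - s / t := by linarith
    refine ⟨(CA * C / t) * (1 - s / t)⁻¹, mul_nonneg (by positivity) (inv_nonneg.mpr hq2.le),
      fun j => ?_⟩
    obtain ⟨hterm, hsummable⟩ := summable_shift A hs0 hs1 hCA a hst ht1 hC0 hC (j+1)
    have hsumm : Summable (fun n : ℕ => (CA * C / t ^ (j+1)) * (s / t) ^ n) :=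
      (summable_geometric_of_lt_one hq0 hq1).mul_left _
    have h1 : ‖b j‖ ≤ CA * C / t ^ (j+1) * (1 - s / t)⁻¹ := by
      have := (norm_tsum_le_tsum_norm (hsummable.norm)).trans
        (Summable.tsum_le_tsum hterm (hsummable.norm) hsumm)
      rwa [tsum_mul_left, tsum_geometric_of_lt_one hq0 hq1] at this
    have h2 : ‖b j‖ * t ^ j ≤ CA * C / t ^ (j+1) * (1 - s / t)⁻¹ * t ^ j :=
      mul_le_mul_of_nonneg_right h1 (by positivity)
    refine h2.trans (le_of_eq ?_)
    have hne : (1:ℝ) - s / t ≠ 0 := ne_of_gt (by linarith)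
    have hts : t - s ≠ 0 := ne_of_gt (by linarith)
    have htj : t ^ j ≠ 0 := by positivity
    field_simp
    rw [pow_succ]
    ring
  -- the recurrence
  have hrel : ∀ j : ℕ, b j = a (j+1) + A (b (j+1)) := by
    intro j
    have h0 := Summable.tsum_eq_zero_add (hsum (j+1))
    rw [hbdef]
    simp only []
    rw [h0]
    congr 1
    · simp
    · rw [ContinuousLinearMap.map_tsum A (hsum (j+1+1))]
      apply tsum_congr
      intro n
      rw [show n+1+(j+1) = n+(j+1+1) from by omega, pow_succ', ContinuousLinearMap.mul_apply]
  -- the power series of h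
  set q : FormalMultilinearSeries ℂ ℂ V :=
    fun j => ContinuousMultilinearMap.mkPiRing ℂ (Fin j) (b j) with hqdef
  have hqrad : 1 ≤ q.radius := by
    apply ENNReal.le_of_forall_nnreal_lt
    intro r hr
    have hr1 : (r:ℝ) < 1 := by exact_mod_cast hr
    have h1 : (r:ℝ) ≤ max (r:ℝ) s := le_max_left _ _
    have h2 : s ≤ max (r:ℝ) s := le_max_right _ _
    have hm1 : max (r:ℝ) s < 1 := max_lt hr1 hs1
    have hst : s < (max (r:ℝ) s + 1)/2 := by linarith
    have ht1 : (max (r:ℝ) s + 1)/2 < 1 := by linarith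
    have hrt : (r:ℝ) ≤ (max (r:ℝ) s + 1)/2 := by linarith
    obtain ⟨D, hD0, hD⟩ := hbnorm ((max (r:ℝ) s + 1)/2) hst ht1
    apply q.le_radius_of_bound D
    intro j
    have hnq : ‖q j‖ = ‖b j‖ := ContinuousMultilinearMap.norm_mkPiRing (b j)
    rw [hnq]
    calc ‖b j‖ * (r:ℝ) ^ j ≤ ‖b j‖ * ((max (r:ℝ) s + 1)/2) ^ j := by
          apply mul_le_mul_of_nonneg_left _ (norm_nonneg _)
          exact pow_le_pow_left₀ r.coe_nonneg hrt j
      _ ≤ D := hD j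
  have hq0 : (0:ℝ≥0∞) < q.radius := lt_of_lt_of_le one_pos hqrad
  have hq := q.hasFPowerSeriesOnBall hq0
  have hball : ball (0:ℂ) 1 ⊆ Metric.eball (0:ℂ) q.radius := by
    intro x hx
    rw [mem_ball, dist_eq_norm, sub_zero] at hx
    rw [EMetric.mem_ball, edist_zero_right]
    calc (‖x‖₊ : ℝ≥0∞) < 1 := by exact_mod_cast hx
      _ ≤ q.radius := hqrad
  have hdiff : DifferentiableOn ℂ q.sum (ball (0:ℂ) 1) := by
    have h0 : HasFPowerSeriesOnBall q.sum q 0 q.radius := hq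
    have := h0.differentiableOn
    exact this.mono hball
  have hS : ∀ z : ℂ, ‖z‖ < 1 → HasSum (fun j => z ^ j • b j) (q.sum z) := by
    intro z hz
    have hz' : z ∈ Metric.eball (0:ℂ) q.radius :=
      hball (by simpa [mem_ball, dist_eq_norm] using hz)
    have := q.hasSum hz'
    simpa [hqdef, ContinuousMultilinearMap.mkPiRing_apply] using this
  refine ⟨a 0 + A (b 0), q.sum, hdiff, ?_⟩
  intro z hz0
  have hz : ‖z‖ < 1 := by simpa [mem_ball, dist_eq_norm] using hz0
  have Sg := ha z hz
  have Sh := hS z hz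
  have S1 : HasSum (fun j => z ^ (j+1) • b j) (z • q.sum z) := by
    simpa [smul_smul, ← pow_succ'] using Sh.const_smul z
  have SA : HasSum (fun j => z ^ j • A (b j)) (A (q.sum z)) := by
    simpa [map_smul] using Sh.mapL A
  have SA' : HasSum (fun j => z ^ (j+1) • A (b (j+1))) (A (q.sum z) - A (b 0)) := by
    have := (hasSum_nat_add_iff' (f := fun j => z ^ j • A (b j)) 1).mpr SA
    simpa using this
  have S2 := S1.sub SA'
  have S2' : HasSum (fun j => z ^ (j+1) • a (j+1)) (z • q.sum z - (A (q.sum z) - A (b 0))) := by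
    refine S2.congr_fun fun j => ?_
    rw [← smul_sub]
    congr 1
    rw [hrel j]
    abel
  have final := (hasSum_nat_add_iff (f := fun j => z ^ j • a j) 1).mp S2'
  have hgz := Sg.unique final
  rw [hgz]
  simp only [Finset.sum_range_one, pow_zero, one_smul]
  abel

lemma uniq_zero (A : V →L[ℂ] V) {s CA : ℝ} (hs0 : 0 < s) (hs1 : s < 1) (hCA0 : 0 ≤ CA)
    (hCA : ∀ n : ℕ, ‖A ^ n‖ ≤ CA * s ^ n)
    (w : V) (k : ℂ → V) (hk : DifferentiableOn ℂ k (ball (0:ℂ) 1))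
    (hw : ∀ z ∈ ball (0:ℂ) 1, w = z • k z - A (k z)) : w = 0 := by
  obtain ⟨c, hc, hcb⟩ := exists_coeffs k hk
  -- the formal power series of `z ↦ z • k z - A (k z)`
  set d : ℕ → V := fun j => Nat.rec (-(A (c 0))) (fun j _ => c j - A (c (j+1))) j with hd
  have hd0 : d 0 = -(A (c 0)) := rfl
  have hdS : ∀ j, d (j+1) = c j - A (c (j+1)) := fun j => rfl
  set u : FormalMultilinearSeries ℂ ℂ V :=
    fun j => ContinuousMultilinearMap.mkPiRing ℂ (Fin j) (d j) with hu
  obtain ⟨C, hC0, hC⟩ := hcb 2⁻¹ (by norm_num) (by norm_num)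
  have hub : HasFPowerSeriesOnBall (fun _ => w) u 0 (2⁻¹ : ℝ≥0) := by
    refine ⟨?_, by norm_num, ?_⟩
    · apply u.le_radius_of_bound (‖A (c 0)‖ + C + ‖A‖ * C)
      intro j
      have hnorm : ∀ j, ‖u j‖ = ‖d j‖ := fun j => ContinuousMultilinearMap.norm_mkPiRing (d j)
      have hcoe : ((2⁻¹ : ℝ≥0) : ℝ) = 2⁻¹ := by norm_num
      rw [hnorm, hcoe]
      cases j with
      | zero => simp [hd0]; nlinarith [norm_nonneg (A (c 0)), mul_nonneg (norm_nonneg (A : V →L[ℂ] V)) hC0]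
      | succ j =>
        have h1 : ‖d (j+1)‖ ≤ ‖c j‖ + ‖A‖ * ‖c (j+1)‖ := by
          rw [hdS]
          exact (norm_sub_le _ _).trans (by gcongr; exact A.le_opNorm _)
        have e1 : ‖c j‖ * (2⁻¹:ℝ) ^ (j+1) ≤ C := by
          calc ‖c j‖ * (2⁻¹:ℝ) ^ (j+1) ≤ ‖c j‖ * (2⁻¹:ℝ) ^ j :=
                mul_le_mul_of_nonneg_left
                  (pow_le_pow_of_le_one (by norm_num) (by norm_num) (Nat.le_succ j))
                  (norm_nonneg _)
            _ ≤ C := hC j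
        have e2 : ‖c (j+1)‖ * (2⁻¹:ℝ) ^ (j+1) ≤ C := hC (j+1)
        have hA0 : (0:ℝ) ≤ ‖A‖ := norm_nonneg _
        have hp0 : (0:ℝ) < (2⁻¹:ℝ) ^ (j+1) := by positivity
        nlinarith [norm_nonneg (A (c 0)), norm_nonneg (c j), norm_nonneg (c (j+1)), h1]
    · intro y hy
      have hy1 : ‖y‖ < 1 := by
        rw [EMetric.mem_ball, edist_zero_right] at hy
        have : (‖y‖₊ : ℝ≥0∞) < (2⁻¹ : ℝ≥0) := hy
        have h2 : (‖y‖₊ : ℝ≥0) < (2⁻¹ : ℝ≥0) := by exact_mod_cast this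
        have h3 : ‖y‖ < (2⁻¹:ℝ) := by exact_mod_cast h2
        linarith
      have Sk := hc y hy1
      have S1 : HasSum (fun j => y ^ (j+1) • c j) (y • k y) := by
        have := Sk.const_smul y
        simpa [smul_smul, ← pow_succ'] using this
      have SA : HasSum (fun j => y ^ j • A (c j)) (A (k y)) := by
        have := Sk.mapL A
        simpa [map_smul] using this
      have SA' : HasSum (fun j => y ^ (j+1) • A (c (j+1))) (A (k y) - A (c 0)) := by
        have := (hasSum_nat_add_iff' (f := fun j => y ^ j • A (c j)) 1).mpr SA
        simpa using this
      have S2 := S1.sub SA'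
      have S2' : HasSum (fun j => y ^ (j+1) • d (j+1)) (y • k y - (A (k y) - A (c 0))) := by
        refine S2.congr_fun fun j => ?_
        rw [hdS, smul_sub]
      have final := (hasSum_nat_add_iff (f := fun j => y ^ j • d j) 1).mp S2'
      have : HasSum (fun j => y ^ j • d j)
          (y • k y - (A (k y) - A (c 0)) + ∑ i ∈ Finset.range 1, y ^ i • d i) := final
      simp only [Finset.sum_range_one, pow_zero, one_smul, hd0] at this
      have hww : w = y • k y - A (k y) := hw y (by simpa [mem_ball, dist_eq_norm] using hy1)
      convert this using 2 with j
      · simp [hu, ContinuousMultilinearMap.mkPiRing_apply]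
      · rw [hww]; abel
  -- compare with the constant power series
  have heq : u = constFormalMultilinearSeries ℂ ℂ w :=
    hub.hasFPowerSeriesAt.eq_formalMultilinearSeries hasFPowerSeriesAt_const
  have hd_eq : ∀ j, d j = (constFormalMultilinearSeries ℂ ℂ w j) (fun _ => 1) := by
    intro j
    have := congrFun heq j
    calc d j = (u j) (fun _ => 1) := by simp [hu, ContinuousMultilinearMap.mkPiRing_apply]
      _ = _ := by rw [this]
  have hrel : ∀ j, c j = A (c (j+1)) := by
    intro j
    have := hd_eq (j+1)
    rw [hdS, constFormalMultilinearSeries_apply_of_nonzero (Nat.succ_ne_zero j)] at this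
    simp only [ContinuousMultilinearMap.zero_apply] at this
    have := sub_eq_zero.mp this
    exact this
  have hw0 : w = -(A (c 0)) := by
    have := hd_eq 0
    rw [hd0] at this
    rw [this]
    simp [constFormalMultilinearSeries]
  have hiter : ∀ m, c 0 = (A ^ m) (c m) := by
    intro m
    induction m with
    | zero => simp
    | succ m ih =>
      rw [ih, hrel m, pow_succ, ContinuousLinearMap.mul_apply]
  obtain ⟨C', hC'0, hC'⟩ := hcb ((s+1)/2) (by linarith) (by linarith)
  have hbound : ∀ m : ℕ, ‖w‖ ≤ (CA * C' * s) * (s / ((s+1)/2)) ^ m := by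
    intro m
    have ht0 : (0:ℝ) < (s+1)/2 := by linarith
    have h1 : ‖w‖ = ‖(A ^ (m+1)) (c m)‖ := by
      rw [hw0, norm_neg, hiter m, ← ContinuousLinearMap.mul_apply, ← pow_succ']
    have h2 : ‖(A ^ (m+1)) (c m)‖ ≤ (CA * s ^ (m+1)) * ‖c m‖ :=
      ((A ^ (m+1)).le_opNorm _).trans (by gcongr; exact hCA (m+1))
    have h3 : ‖c m‖ ≤ C' / ((s+1)/2) ^ m := by
      rw [le_div_iff₀ (by positivity)]
      exact hC' m
    calc ‖w‖ = ‖(A ^ (m+1)) (c m)‖ := h1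
      _ ≤ (CA * s ^ (m+1)) * ‖c m‖ := h2
      _ ≤ (CA * s ^ (m+1)) * (C' / ((s+1)/2) ^ m) := by
          apply mul_le_mul_of_nonneg_left h3 (by positivity)
      _ = (CA * C' * s) * (s / ((s+1)/2)) ^ m := by
          rw [div_pow, div_pow, pow_succ]
          field_simp
          rw [div_pow]
          field_simp
  have htend : Filter.Tendsto (fun m : ℕ => (CA * C' * s) * (s / ((s+1)/2)) ^ m) atTop (𝓝 0) := by
    rw [show (0:ℝ) = (CA * C' * s) * 0 by ring]
    exact (tendsto_pow_atTop_nhds_zero_of_lt_one (by positivity) (by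
      rw [div_lt_one (by linarith)]; linarith)).const_mul _
  have : ‖w‖ ≤ 0 := ge_of_tendsto' htend hbound
  exact norm_le_zero_iff.mp this

end CokerAux

/-- If every eigenvalue of `A ∈ End ℂ V` has modulus `< 1`, then for
every holomorphic `g : 𝔻 → V` there are a unique vector `v ∈ V` and a holomorphic
`h : 𝔻 → V` with `g(z) = v + (z·id − A)(h(z))` on the open unit disk. -/
theorem coker_of_z_sub_A_eq_V_on_disk
    {V : Type} [NormedAddCommGroup V] [NormedSpace ℂ V] [FiniteDimensional ℂ V]
    (A : V →L[ℂ] V) (hA : ∀ μ ∈ spectrum ℂ A, ‖μ‖ < 1)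
    (g : ℂ → V) (hg : DifferentiableOn ℂ g (Metric.ball (0 : ℂ) 1)) :
    ∃! v : V, ∃ h : ℂ → V, DifferentiableOn ℂ h (Metric.ball (0 : ℂ) 1) ∧
      ∀ z ∈ Metric.ball (0 : ℂ) 1, g z = v + (z • h z - A (h z)) := by
  obtain ⟨s, CA, hs0, hs1, hCA0, hCA⟩ := CokerAux.pow_bound A hA
  obtain ⟨a, ha, hab⟩ := CokerAux.exists_coeffs g hg
  obtain ⟨v, h, hdiff, hmain⟩ := CokerAux.exists_rep A hs0 hs1 hCA0 hCA a g ha hab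
  refine ⟨v, ⟨h, hdiff, hmain⟩, ?_⟩
  rintro v' ⟨h', hd', he'⟩
  have hz0 : v' - v = 0 := by
    apply CokerAux.uniq_zero A hs0 hs1 hCA0 hCA (v' - v) (fun z => h z - h' z)
      (hdiff.sub hd')
    intro z hz
    have e1 := hmain z hz
    have e2 := he' z hz
    have key : v + (z • h z - A (h z)) = v' + (z • h' z - A (h' z)) := e1.symm.trans e2
    have h5 : v + (z • h z - A (h z)) - (v' + (z • h' z - A (h' z))) = 0 := by
      rw [key]; abel
    show v' - v = z • (h z - h' z) - A (h z - h' z)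
    rw [smul_sub, map_sub]
    calc v' - v
        = -(v + (z • h z - A (h z)) - (v' + (z • h' z - A (h' z))))
            + (z • h z - z • h' z - (A (h z) - A (h' z))) := by abel
      _ = z • h z - z • h' z - (A (h z) - A (h' z)) := by rw [h5]; abel
  exact sub_eq_zero.mp hz0
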